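/- Let σ : ℝ^d → ℝ^{d×m} and b : ℝ^d → ℝ^d be measurable, set a(x) := σ(x)σ(x)ᵀ, and for twice continuously differentiable ψ : ℝ^d → ℝ define 𝓛₀ψ(x) := tr(a(x)·∇²ψ(x)) + b(x)·∇ψ(x). Let Φ : ℝ^d → ℝ^d be twice continuously differentiable and b̃ : ℝ^d → ℝ^d be such that 𝓛₀Φ_i = −b̃_i for each component i = 1,…,d. Let μ be a probability measure on ℝ^d such that for all i, j ∈ {1,…,d} the functions b̃_i·Φ_j, ⟨σᵀ∇Φ_i, σᵀ∇Φ_j⟩ and 𝓛₀(Φ_i·Φ_j) are μ-integrable and ∫_{ℝ^d} 𝓛₀(Φ_i·Φ_j) dμ = 0. Then for all i, j ∈ {1,…,d}, (1/2)·∫_{ℝ^d} ( b̃_i(x)·Φ_j(x) + Φ_i(x)·b̃_j(x) ) μ(dx) = ∫_{ℝ^d} ⟨σ(x)ᵀ∇Φ_i(x), σ(x)ᵀ∇Φ_j(x)⟩ μ(dx). -/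

import Mathlib

noncomputable section

open MeasureTheory Matrix

/-- The `i`-th standard basis vector of `ℝ^d`. -/
def esingle {d : ℕ} (i : Fin d) : EuclideanSpace ℝ (Fin d) :=
  EuclideanSpace.single i 1

/-- Partial derivative `∂_i ψ(x)`. -/
def pd {d : ℕ} (ψ : EuclideanSpace ℝ (Fin d) → ℝ)
    (x : EuclideanSpace ℝ (Fin d)) (i : Fin d) : ℝ :=
  fderiv ℝ ψ x (esingle i)

/-- Hessian entry `∂_i ∂_j ψ(x)` as the second iterated Fréchet derivative. -/
def hess2 {d : ℕ} (ψ : EuclideanSpace ℝ (Fin d) → ℝ)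
    (x : EuclideanSpace ℝ (Fin d)) (i j : Fin d) : ℝ :=
  iteratedFDeriv ℝ 2 ψ x ![esingle i, esingle j]

/-- The second-order operator
`𝓛₁ψ(x) := tr(σ(x)σ(x)ᵀ · ∇²ψ(x)) + b(x)·∇ψ(x)`. -/
def Lgen {d m : ℕ} (b : EuclideanSpace ℝ (Fin d) → EuclideanSpace ℝ (Fin d))
    (σ : EuclideanSpace ℝ (Fin d) → Matrix (Fin d) (Fin m) ℝ)
    (ψ : EuclideanSpace ℝ (Fin d) → ℝ) (x : EuclideanSpace ℝ (Fin d)) : ℝ :=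
  (∑ i, ∑ j, (σ x * (σ x)ᵀ) i j * hess2 ψ x j i) + ∑ i, b x i * pd ψ x i

lemma pd_mul {d : ℕ} (f g : EuclideanSpace ℝ (Fin d) → ℝ)
    (x : EuclideanSpace ℝ (Fin d))
    (hf : DifferentiableAt ℝ f x) (hg : DifferentiableAt ℝ g x) (i : Fin d) :
    pd (fun y => f y * g y) x i = f x * pd g x i + g x * pd f x i := by
  unfold pd
  rw [fderiv_fun_mul hf hg]
  simp [smul_eq_mul]

lemma hess2_eq {d : ℕ} (ψ : EuclideanSpace ℝ (Fin d) → ℝ)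
    (x : EuclideanSpace ℝ (Fin d)) (i j : Fin d) :
    hess2 ψ x i j = fderiv ℝ (fderiv ℝ ψ) x (esingle i) (esingle j) := by
  rw [hess2, iteratedFDeriv_two_apply]
  simp

lemma hess2_mul {d : ℕ} (f g : EuclideanSpace ℝ (Fin d) → ℝ)
    (hf : ContDiff ℝ 2 f) (hg : ContDiff ℝ 2 g)
    (x : EuclideanSpace ℝ (Fin d)) (i j : Fin d) :
    hess2 (fun y => f y * g y) x i j
      = f x * hess2 g x i j + g x * hess2 f x i j
        + pd f x i * pd g x j + pd g x i * pd f x j := by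
  have hf1 : Differentiable ℝ f := hf.differentiable (by norm_num)
  have hg1 : Differentiable ℝ g := hg.differentiable (by norm_num)
  have hDf : ContDiff ℝ 1 (fderiv ℝ f) := hf.fderiv_right (by norm_num)
  have hDg : ContDiff ℝ 1 (fderiv ℝ g) := hg.fderiv_right (by norm_num)
  have key : fderiv ℝ (fun y => f y * g y)
      = fun y => f y • fderiv ℝ g y + g y • fderiv ℝ f y :=
    funext fun y => fderiv_fun_mul (hf1 y) (hg1 y)
  have d1 : DifferentiableAt ℝ (fun y => f y • fderiv ℝ g y) x :=
    (hf1 x).smul ((hDg.differentiable one_ne_zero) x)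
  have d2 : DifferentiableAt ℝ (fun y => g y • fderiv ℝ f y) x :=
    (hg1 x).smul ((hDf.differentiable one_ne_zero) x)
  unfold hess2
  rw [iteratedFDeriv_two_apply, key, fderiv_fun_add d1 d2,
    fderiv_fun_smul (hf1 x) ((hDg.differentiable one_ne_zero) x),
    fderiv_fun_smul (hg1 x) ((hDf.differentiable one_ne_zero) x)]
  simp only [ContinuousLinearMap.add_apply, ContinuousLinearMap.smul_apply,
    ContinuousLinearMap.smulRight_apply, smul_eq_mul, Matrix.cons_val_zero,
    Matrix.cons_val_one, Matrix.head_cons]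
  simp only [hess2_eq, pd, iteratedFDeriv_two_apply, Matrix.cons_val_zero,
    Matrix.cons_val_one, Matrix.head_cons]
  ring

lemma sum3 {d m : ℕ} (σ : Fin d → Fin m → ℝ) (p q : Fin d → ℝ) :
    ∑ i, ∑ j, (∑ k, σ i k * σ j k) * (p j * q i)
      = ∑ k, (∑ l, σ l k * p l) * (∑ l, σ l k * q l) := by
  have h : ∀ k, (∑ l, σ l k * p l) * (∑ l, σ l k * q l)
      = ∑ i, ∑ j, σ i k * σ j k * (p j * q i) := by
    intro k
    rw [Finset.sum_mul_sum]
    rw [Finset.sum_comm]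
    exact Finset.sum_congr rfl fun i _ => Finset.sum_congr rfl fun j _ => by ring
  calc ∑ i, ∑ j, (∑ k, σ i k * σ j k) * (p j * q i)
      = ∑ i, ∑ j, ∑ k, σ i k * σ j k * (p j * q i) := by
        simp only [Finset.sum_mul]
    _ = ∑ i, ∑ k, ∑ j, σ i k * σ j k * (p j * q i) :=
        Finset.sum_congr rfl fun i _ => Finset.sum_comm
    _ = ∑ k, ∑ i, ∑ j, σ i k * σ j k * (p j * q i) := Finset.sum_comm
    _ = ∑ k, (∑ l, σ l k * p l) * (∑ l, σ l k * q l) :=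
        Finset.sum_congr rfl fun k _ => (h k).symm

lemma Lgen_mul {d m : ℕ} (b : EuclideanSpace ℝ (Fin d) → EuclideanSpace ℝ (Fin d))
    (σ : EuclideanSpace ℝ (Fin d) → Matrix (Fin d) (Fin m) ℝ)
    (f g : EuclideanSpace ℝ (Fin d) → ℝ)
    (hf : ContDiff ℝ 2 f) (hg : ContDiff ℝ 2 g) (x : EuclideanSpace ℝ (Fin d)) :
    Lgen b σ (fun y => f y * g y) x
      = f x * Lgen b σ g x + g x * Lgen b σ f x
        + 2 * ∑ k, (∑ l, σ x l k * pd f x l) * (∑ l, σ x l k * pd g x l) := by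
  have hfd : Differentiable ℝ f := hf.differentiable (by norm_num)
  have hgd : Differentiable ℝ g := hg.differentiable (by norm_num)
  unfold Lgen
  simp only [hess2_mul f g hf hg, pd_mul f g x (hfd x) (hgd x),
    Matrix.mul_apply, Matrix.transpose_apply, mul_add, Finset.sum_add_distrib]
  have e1 : ∑ i, ∑ j, (∑ k, σ x i k * σ x j k) * (f x * hess2 g x j i)
      = f x * ∑ i, ∑ j, (∑ k, σ x i k * σ x j k) * hess2 g x j i := by
    rw [Finset.mul_sum]
    refine Finset.sum_congr rfl fun i _ => ?_
    rw [Finset.mul_sum]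
    exact Finset.sum_congr rfl fun j _ => by ring
  have e2 : ∑ i, ∑ j, (∑ k, σ x i k * σ x j k) * (g x * hess2 f x j i)
      = g x * ∑ i, ∑ j, (∑ k, σ x i k * σ x j k) * hess2 f x j i := by
    rw [Finset.mul_sum]
    refine Finset.sum_congr rfl fun i _ => ?_
    rw [Finset.mul_sum]
    exact Finset.sum_congr rfl fun j _ => by ring
  have e3 : ∑ i, ∑ j, (∑ k, σ x i k * σ x j k) * (pd f x j * pd g x i)
      = ∑ k, (∑ l, σ x l k * pd f x l) * (∑ l, σ x l k * pd g x l) :=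
    sum3 (fun i k => σ x i k) (pd f x) (pd g x)
  have e4 : ∑ i, ∑ j, (∑ k, σ x i k * σ x j k) * (pd g x j * pd f x i)
      = ∑ k, (∑ l, σ x l k * pd f x l) * (∑ l, σ x l k * pd g x l) := by
    rw [sum3 (fun i k => σ x i k) (pd g x) (pd f x)]
    exact Finset.sum_congr rfl fun k _ => by ring
  have e5 : ∑ i, b x i * (f x * pd g x i) = f x * ∑ i, b x i * pd g x i := by
    rw [Finset.mul_sum]; exact Finset.sum_congr rfl fun i _ => by ring
  have e6 : ∑ i, b x i * (g x * pd f x i) = g x * ∑ i, b x i * pd f x i := by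
    rw [Finset.mul_sum]; exact Finset.sum_congr rfl fun i _ => by ring
  rw [e1, e2, e3, e4, e5, e6]
  ring

/-- Cross-term identity in periodic homogenization: if `𝓛₀Φ_i = −b̃_i` and the
invariant measure `μ` kills `𝓛₀(Φ_i Φ_j)`, then
`(1/2)∫ (b̃_i Φ_j + Φ_i b̃_j) dμ = ∫ ⟨σᵀ∇Φ_i, σᵀ∇Φ_j⟩ dμ`. -/
theorem homogenization_cross_term_identity {d m : ℕ}
    (σ : EuclideanSpace ℝ (Fin d) → Matrix (Fin d) (Fin m) ℝ)
    (b : EuclideanSpace ℝ (Fin d) → EuclideanSpace ℝ (Fin d))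
    (hb : Measurable b) (hσ : ∀ i j, Measurable fun x => σ x i j)
    (Φ btil : EuclideanSpace ℝ (Fin d) → EuclideanSpace ℝ (Fin d))
    (hΦ : ContDiff ℝ 2 Φ)
    (hcell : ∀ (i : Fin d) (x : EuclideanSpace ℝ (Fin d)),
      Lgen b σ (fun y => Φ y i) x = -(btil x i))
    (μ : Measure (EuclideanSpace ℝ (Fin d))) [IsProbabilityMeasure μ]
    (hint1 : ∀ i j : Fin d, Integrable (fun x => btil x i * Φ x j) μ)
    (hint2 : ∀ i j : Fin d, Integrable (fun x =>
      ∑ k, (∑ l, σ x l k * pd (fun y => Φ y i) x l)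
        * (∑ l, σ x l k * pd (fun y => Φ y j) x l)) μ)
    (hint3 : ∀ i j : Fin d, Integrable
      (fun x => Lgen b σ (fun y => Φ y i * Φ y j) x) μ)
    (hzero : ∀ i j : Fin d,
      ∫ x, Lgen b σ (fun y => Φ y i * Φ y j) x ∂μ = 0) :
    ∀ i j : Fin d,
      (1 / 2 : ℝ) * ∫ x, (btil x i * Φ x j + Φ x i * btil x j) ∂μ
        = ∫ x, ∑ k, (∑ l, σ x l k * pd (fun y => Φ y i) x l)
            * (∑ l, σ x l k * pd (fun y => Φ y j) x l) ∂μ := by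

  intro i j
  have hΦi : ContDiff ℝ 2 (fun y => Φ y i) := by
    exact (contDiff_euclidean.mp hΦ) i
  have hΦj : ContDiff ℝ 2 (fun y => Φ y j) := by
    exact (contDiff_euclidean.mp hΦ) j
  set Γ : EuclideanSpace ℝ (Fin d) → ℝ := fun x =>
    ∑ k, (∑ l, σ x l k * pd (fun y => Φ y i) x l)
      * (∑ l, σ x l k * pd (fun y => Φ y j) x l) with hΓ
  have key : (fun x => Lgen b σ (fun y => Φ y i * Φ y j) x)
      = fun x => -(btil x i * Φ x j + Φ x i * btil x j) + 2 * Γ x := by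
    funext x
    rw [Lgen_mul b σ _ _ hΦi hΦj x, hcell i x, hcell j x]
    simp only [hΓ]
    ring
  have hg1 : Integrable (fun x => btil x i * Φ x j + Φ x i * btil x j) μ := by
    have h2 : Integrable (fun x => Φ x i * btil x j) μ := by
      simpa [mul_comm] using hint1 j i
    exact (hint1 i j).add h2
  have hΓint : Integrable Γ μ := hint2 i j
  have h0 := hzero i j
  rw [key] at h0
  have hadd : ∫ x, (-(btil x i * Φ x j + Φ x i * btil x j) + 2 * Γ x) ∂μ
      = (∫ x, -(btil x i * Φ x j + Φ x i * btil x j) ∂μ) + ∫ x, 2 * Γ x ∂μ :=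
    integral_add hg1.neg (hΓint.const_mul 2)
  rw [hadd, integral_neg, integral_const_mul] at h0
  linarith
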